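/- Let N be a nonzero torsion-free divisible abelian group. Then the character group N^+ = Hom_ℤ(N, ℚ/ℤ) is uncountable. Consequently, ℚ is not a dual group. -/

import Mathlib

/-- The group `ℚ/ℤ`. -/
abbrev RatModInt : Type := ℚ ⧸ AddSubgroup.zmultiples (1 : ℚ)

noncomputable section CharAux

namespace CharAux

open Finset

/-- The projection `ℚ → ℚ/ℤ`. -/
def pi : ℚ →+ RatModInt := QuotientAddGroup.mk' _

lemma int_mem {q : ℚ} (z : ℤ) (h : (z : ℚ) = q) : q ∈ AddSubgroup.zmultiples (1 : ℚ) :=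
  ⟨z, by simpa using h⟩

open Classical in
/-- One term of our factorial series. -/
def term (s : Set ℕ) (k : ℕ) : ℚ := if k ∈ s then ((k + 2).factorial : ℚ) else 0

/-- Partial sums of the factorial series. -/
def S (s : Set ℕ) (m : ℕ) : ℚ := ∑ k ∈ Finset.range m, term s k

lemma term_int {q : ℚ} {k : ℕ} (h : q.den ∣ (k + 2).factorial) (s : Set ℕ) :
    q * term s k ∈ AddSubgroup.zmultiples (1 : ℚ) := by
  unfold term
  split_ifs
  · obtain ⟨c, hc⟩ := h
    refine int_mem (q.num * c) ?_
    have h1 : (q.den : ℚ) * q = q.num := Rat.den_mul_eq_num q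
    rw [hc]
    push_cast
    rw [← h1]; ring
  · simpa using AddSubgroup.zero_mem (AddSubgroup.zmultiples (1 : ℚ))

lemma indep {q : ℚ} {m m' : ℕ} (s : Set ℕ) (h : q.den ∣ (m + 2).factorial)
    (h' : q.den ∣ (m' + 2).factorial) : pi (q * S s m) = pi (q * S s m') := by
  wlog hmm : m ≤ m' generalizing m m'
  · exact (this h' h (not_le.mp hmm).le).symm
  have hmem : q * S s m' - q * S s m ∈ AddSubgroup.zmultiples (1 : ℚ) := by
    rw [← mul_sub, S, S, ← Finset.sum_Ico_eq_sub _ hmm, Finset.mul_sum]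
    refine AddSubgroup.sum_mem _ fun k hk => ?_
    have hk' := Finset.mem_Ico.mp hk
    exact term_int (dvd_trans h (Nat.factorial_dvd_factorial (by omega))) s
  have h0 : pi (q * S s m' - q * S s m) = 0 := (QuotientAddGroup.eq_zero_iff _).mpr hmem
  rw [map_sub, sub_eq_zero] at h0
  exact h0.symm

lemma den_dvd_self_fac (q : ℚ) : q.den ∣ (q.den + 2).factorial :=
  Nat.dvd_factorial q.den_pos (by omega)

/-- The character of `ℚ` associated to a set of naturals. -/
def chi (s : Set ℕ) : ℚ →+ RatModInt :=
  AddMonoidHom.mk' (fun q => pi (q * S s q.den)) (by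
    intro a b
    set m := a.den + b.den + (a + b).den with hm
    have hd : ∀ q : ℚ, q.den ≤ m → pi (q * S s q.den) = pi (q * S s m) := fun q hq =>
      indep s (den_dvd_self_fac q) (Nat.dvd_factorial q.den_pos (by omega))
    rw [hd (a + b) (by omega), hd a (by omega), hd b (by omega), ← map_add, add_mul])

lemma chi_apply (s : Set ℕ) (q : ℚ) : chi s q = pi (q * S s q.den) := rfl

lemma chi_injective : Function.Injective chi := by
  classical
  intro s t h
  by_contra hne
  have hex : ∃ k, ¬ ((k ∈ s) ↔ (k ∈ t)) := by
    by_contra h2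
    push_neg at h2
    exact hne (Set.ext fun k => h2 k)
  set n := Nat.find hex with hn
  have hspec : ¬ ((n ∈ s) ↔ (n ∈ t)) := Nat.find_spec hex
  have hmin : ∀ k < n, ((k ∈ s) ↔ (k ∈ t)) := fun k hk => by
    have := Nat.find_min hex hk
    simpa using this
  set q : ℚ := (((n + 3).factorial : ℕ) : ℚ)⁻¹ with hq
  have hden : q.den = (n + 3).factorial :=
    Rat.inv_natCast_den_of_pos (Nat.factorial_pos _)
  have hdvd : q.den ∣ ((n + 1) + 2).factorial := by rw [hden]
  have h1 : chi s q = pi (q * S s (n + 1)) := by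
    rw [chi_apply]; exact indep s (den_dvd_self_fac q) hdvd
  have h2 : chi t q = pi (q * S t (n + 1)) := by
    rw [chi_apply]; exact indep t (den_dvd_self_fac q) hdvd
  have heq : pi (q * S s (n + 1)) = pi (q * S t (n + 1)) := by
    rw [← h1, ← h2, h]
  have hmem : q * S s (n + 1) - q * S t (n + 1) ∈ AddSubgroup.zmultiples (1 : ℚ) := by
    have := sub_eq_zero.mpr heq
    rw [← map_sub] at this
    exact (QuotientAddGroup.eq_zero_iff _).mp this
  have hSn : S s n = S t n := by
    refine Finset.sum_congr rfl fun k hk => ?_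
    have hk' := Finset.mem_range.mp hk
    by_cases hks : k ∈ s
    · simp only [term, if_pos hks, if_pos ((hmin k hk').mp hks)]
    · simp only [term, if_neg hks, if_neg (fun hkt => hks ((hmin k hk').mpr hkt))]
  have hdiff : q * S s (n + 1) - q * S t (n + 1) = q * (term s n - term t n) := by
    rw [S, Finset.sum_range_succ, S, Finset.sum_range_succ, ← S, ← S, hSn]
    ring
  have hfact : (((n + 3).factorial : ℕ) : ℚ) = ((n + 3 : ℕ) : ℚ) * (((n + 2).factorial : ℕ) : ℚ) := by
    rw [show n + 3 = (n + 2) + 1 from rfl, Nat.factorial_succ]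
    push_cast; ring
  have hfacne : (((n + 2).factorial : ℕ) : ℚ) ≠ 0 := by
    exact_mod_cast (Nat.factorial_pos (n + 2)).ne'
  have hn3ne : ((n + 3 : ℕ) : ℚ) ≠ 0 := by positivity
  have hqfac : q * (((n + 2).factorial : ℕ) : ℚ) = ((n + 3 : ℕ) : ℚ)⁻¹ := by
    rw [hq, hfact, mul_inv]
    field_simp
  obtain ⟨z, hz⟩ := hmem
  rw [hdiff] at hz
  have hz' : (z : ℚ) = q * (term s n - term t n) := by simpa using hz
  have hcontra : ∀ z : ℤ, (z : ℚ) = ((n + 3 : ℕ) : ℚ)⁻¹ → False := by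
    intro w hw
    have : (w : ℚ) * ((n + 3 : ℕ) : ℚ) = 1 := by
      rw [hw]; field_simp
    have hint : w * ((n + 3 : ℕ) : ℤ) = 1 := by exact_mod_cast this
    have : ((n + 3 : ℕ) : ℤ) ∣ 1 := Dvd.intro w (by linarith [hint])
    have := Int.le_of_dvd one_pos this
    omega
  by_cases hs : n ∈ s
  · have ht : n ∉ t := fun ht => hspec ⟨fun _ => ht, fun _ => hs⟩
    simp only [term, if_pos hs, if_neg ht, sub_zero] at hz'
    rw [hqfac] at hz'
    exact hcontra z hz'
  · have ht : n ∈ t := by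
      by_contra ht
      exact hspec ⟨fun h' => absurd h' hs, fun h' => absurd h' ht⟩
    simp only [term, if_neg hs, if_pos ht, zero_sub, mul_neg] at hz'
    rw [hqfac] at hz'
    exact hcontra (-z) (by push_cast at hz' ⊢; linarith)

/-- The key lemma: the character group of a nonzero torsion-free divisible group
is uncountable. -/
lemma key (N : Type) [AddCommGroup N] [Nontrivial N]
    (htf : ∀ n : ℤ, n ≠ 0 → ∀ x : N, n • x = 0 → x = 0)
    (hdiv : ∀ n : ℤ, n ≠ 0 → ∀ x : N, ∃ y : N, n • y = x) :
    ¬ Countable (N →+ RatModInt) := by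
  intro hc
  obtain ⟨x₀, hx₀⟩ := exists_ne (0 : N)
  -- the hom ℤ →+ N, n ↦ n • x₀
  set φ : ℤ →+ N := zmultiplesHom N x₀ with hφdef
  have hφ : Function.Injective φ := by
    rw [injective_iff_map_eq_zero]
    intro n hn
    by_contra hne
    exact hx₀ (htf n hne x₀ hn)
  obtain ⟨r, hr⟩ := (Module.Baer.of_divisible ℚ).extension_property_addMonoidHom φ hφ
    (Int.castAddHom ℚ)
  have hrx₀ : r x₀ = 1 := by
    have := DFunLike.congr_fun hr 1
    simpa [hφdef] using this
  -- r is surjective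
  have hrsurj : Function.Surjective r := by
    intro q
    obtain ⟨y, hy⟩ := hdiv (q.den : ℤ) (by exact_mod_cast q.den_pos.ne') x₀
    have h1 : (q.den : ℚ) * r y = 1 := by
      have := congrArg r hy
      rw [map_zsmul, hrx₀] at this
      simpa [zsmul_eq_mul] using this
    refine ⟨q.num • y, ?_⟩
    rw [map_zsmul, zsmul_eq_mul]
    have hden : (q.den : ℚ) ≠ 0 := by exact_mod_cast q.den_pos.ne'
    have hry : r y = (q.den : ℚ)⁻¹ := by field_simp at h1 ⊢; linarith [h1]
    rw [hry]
    conv_rhs => rw [← Rat.num_div_den q]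
    rw [div_eq_mul_inv]
  -- the injection Set ℕ → (N →+ RatModInt)
  have hinj : Function.Injective (fun s : Set ℕ => (chi s).comp r) := by
    intro s t hst
    apply chi_injective
    ext q
    obtain ⟨y, rfl⟩ := hrsurj q
    exact DFunLike.congr_fun hst y
  have : Countable (Set ℕ) := hinj.countable
  obtain ⟨f, hf⟩ := this.exists_injective_nat'
  exact Function.cantor_injective f hf

end CharAux

end CharAux

/-- The character group of a nonzero torsion-free divisible abelian group is uncountable;
consequently `ℚ` is not a dual group. -/
theorem character_group_of_torsionFree_divisible_uncountable
    (N : Type) [AddCommGroup N] [Nontrivial N]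
    (htf : ∀ n : ℤ, n ≠ 0 → ∀ x : N, n • x = 0 → x = 0)
    (hdiv : ∀ n : ℤ, n ≠ 0 → ∀ x : N, ∃ y : N, n • y = x) :
    ¬ Countable (N →+ RatModInt) ∧
      ∀ (N' : Type) [AddCommGroup N'], IsEmpty (ℚ ≃+ (N' →+ RatModInt)) := by
  refine ⟨CharAux.key N htf hdiv, ?_⟩
  intro N' _
  constructor
  intro e
  -- N' is nontrivial
  have hNT : Nontrivial N' := by
    by_contra hsub
    rw [not_nontrivial_iff_subsingleton] at hsub
    have : (0 : ℚ) = 1 := by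
      apply e.injective
      ext x
      rw [Subsingleton.elim x 0, map_zero, map_zero]
    simp at this
  -- N' is torsion-free
  have htf' : ∀ n : ℤ, n ≠ 0 → ∀ x : N', n • x = 0 → x = 0 := by
    intro n hn x hnx
    refine CharacterModule.eq_zero_of_character_apply fun c => ?_
    have hχ : ∀ χ : N' →+ RatModInt, χ x = 0 := by
      intro χ
      set q : ℚ := e.symm χ with hqdef
      have hnq : (n : ℚ) ≠ 0 := by exact_mod_cast hn
      have hsplit : χ = n • e ((n : ℚ)⁻¹ * q) := by
        rw [← map_zsmul, zsmul_eq_mul]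
        rw [show (n : ℚ) * ((n : ℚ)⁻¹ * q) = q by field_simp]
        rw [hqdef, e.apply_symm_apply]
      rw [hsplit]
      show n • ((e ((n : ℚ)⁻¹ * q)) x) = 0
      rw [← map_zsmul, hnx, map_zero]
    exact hχ c
  -- N' is divisible
  have hdiv' : ∀ n : ℤ, n ≠ 0 → ∀ x : N', ∃ y : N', n • y = x := by
    intro n hn x
    by_contra hno
    push_neg at hno
    set μ : N' →+ N' := AddMonoidHom.mk' (fun y => n • y) (fun a b => smul_add n a b) with hμ
    set H : AddSubgroup N' := μ.range with hH
    have hxH : x ∉ H := by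
      rintro ⟨y, hy⟩
      exact hno y hy
    set Q := N' ⧸ H with hQ
    have hmkx : (QuotientAddGroup.mk' H x : Q) ≠ 0 := by
      intro h0
      exact hxH ((QuotientAddGroup.eq_zero_iff x).mp (by simpa using h0))
    obtain ⟨ψ, hψ⟩ := CharacterModule.exists_character_apply_ne_zero_of_ne_zero hmkx
    set χ : N' →+ RatModInt := (ψ : Q →+ RatModInt).comp (QuotientAddGroup.mk' H) with hχdef
    have hχne : χ ≠ 0 := by
      intro h0
      apply hψ
      have := DFunLike.congr_fun h0 x
      exact this
    have hnχ : n • χ = 0 := by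
      ext y
      show n • (χ y) = 0
      rw [← map_zsmul]
      have : n • y ∈ H := ⟨y, rfl⟩
      rw [hχdef]
      show ψ (QuotientAddGroup.mk' H (n • y)) = 0
      rw [QuotientAddGroup.mk'_apply, (QuotientAddGroup.eq_zero_iff _).mpr this, map_zero]
    -- transfer to ℚ
    have hq : e.symm χ ≠ 0 := fun h => hχne (by
      have := congrArg e h
      rwa [e.apply_symm_apply, map_zero] at this)
    have : n • e.symm χ = 0 := by
      rw [← map_zsmul, hnχ, map_zero]
    rw [zsmul_eq_mul] at this
    have hnQ : (n : ℚ) ≠ 0 := by exact_mod_cast hn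
    exact hq ((mul_eq_zero.mp this).resolve_left hnQ)
  -- apply the key lemma to N'
  have := CharAux.key N' htf' hdiv'
  exact this (Countable.of_equiv ℚ e.toEquiv)
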